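/- If A ∈ ℂ^{m×m} satisfies A + A* ≥ 0 (positive semidefinite) and B ∈ ℂ^{m×m} satisfies B + B* < 0 (negative definite), then det(I − AB) ≠ 0. -/

import Mathlib

open Matrix Complex
open scoped ComplexOrder

/-- Euclidean norm of a complex vector. -/
noncomputable def enorm' {m : ℕ} (x : Fin m → ℂ) : ℝ :=
  Real.sqrt (∑ i, Complex.normSq (x i))

/-- Real inner product Re(x* y). -/
noncomputable def rinner {m : ℕ} (x y : Fin m → ℂ) : ℝ :=
  (∑ i, (starRingEnd ℂ) (x i) * y i).re

/-- The gain γ(x, y) = ‖y‖₂ / ‖x‖₂. -/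
noncomputable def gain {m : ℕ} (x y : Fin m → ℂ) : ℝ := enorm' y / enorm' x

/-- The phase θ(x, y) = arccos(Re(x* y)/(‖x‖₂‖y‖₂)) ∈ [0, π]. -/
noncomputable def phase {m : ℕ} (x y : Fin m → ℂ) : ℝ :=
  Real.arccos (rinner x y / (enorm' x * enorm' y))

/-- The point γ(x,y)·e^{iθ(x,y)}. -/
noncomputable def sgPoint {m : ℕ} (x y : Fin m → ℂ) : ℂ :=
  (gain x y : ℂ) * Complex.exp (Complex.I * (phase x y : ℂ))

/-- The scaled graph SG(A). -/
noncomputable def SG {m : ℕ} (A : Matrix (Fin m) (Fin m) ℂ) : Set ℂ :=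
  {z | ∃ x : Fin m → ℂ, x ≠ 0 ∧ A.mulVec x ≠ 0 ∧
      (z = sgPoint x (A.mulVec x) ∨ z = (starRingEnd ℂ) (sgPoint x (A.mulVec x)))}

/-- The inverse scaled graph SG†(B). -/
noncomputable def SGdag {m : ℕ} (B : Matrix (Fin m) (Fin m) ℂ) : Set ℂ :=
  {z | ∃ x : Fin m → ℂ, x ≠ 0 ∧ B.mulVec x ≠ 0 ∧
      (z = sgPoint (B.mulVec x) x ∨ z = (starRingEnd ℂ) (sgPoint (B.mulVec x) x))}

theorem passivity_det_ne_zero {m : ℕ} (A B : Matrix (Fin m) (Fin m) ℂ)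
    (hA : (A + Aᴴ).PosSemidef) (hB : (-(B + Bᴴ)).PosDef) :
    (1 - A * B).det ≠ 0 := by
  intro hdet
  obtain ⟨v, hv, hv0⟩ := (Matrix.exists_mulVec_eq_zero_iff).2 hdet
  have hveq : v = A.mulVec (B.mulVec v) := by
    rw [sub_mulVec, one_mulVec, sub_eq_zero] at hv0
    rw [mulVec_mulVec, ← hv0]
  set y := B.mulVec v with hy
  have hBv := hB.dotProduct_mulVec_pos hv
  have hAy := hA.dotProduct_mulVec_nonneg y
  have e1 : star v ⬝ᵥ ((-(B + Bᴴ)) *ᵥ v) = -(star v ⬝ᵥ y + star (star v ⬝ᵥ y)) := by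
    rw [neg_mulVec, dotProduct_neg, add_mulVec, dotProduct_add, dotProduct_mulVec _ Bᴴ,
      vecMul_conjTranspose, star_star, star_dotProduct, star_star]
  have e2 : star y ⬝ᵥ ((A + Aᴴ) *ᵥ y) = star (star v ⬝ᵥ y) + star v ⬝ᵥ y := by
    conv_lhs => rw [add_mulVec, dotProduct_add, dotProduct_mulVec _ Aᴴ,
      vecMul_conjTranspose, star_star, ← hveq, star_dotProduct]
  rw [e1] at hBv
  rw [e2] at hAy
  have h1 : (star v ⬝ᵥ y).re < 0 := by
    have := (Complex.lt_def.mp hBv).1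
    simp at this
    linarith
  have h2 : 0 ≤ (star v ⬝ᵥ y).re := by
    have := (Complex.le_def.mp hAy).1
    simp at this
    linarith
  linarith
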